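/- arXiv:2202.07484 — 5 statements merged into one kernel-verified Lean document; each statement's English description precedes it below -/
import Mathlib

section
/- Let x ∈ L²(ℝ, ℂ) and let g : ℝ → ℂ be continuously differentiable with g ∈ L²(ℝ) and g' ∈ L²(ℝ). Then for every ω ∈ ℝ, the function t ↦ V_g x(t, ω) is differentiable on ℝ, and its derivative satisfies ∂/∂t V_g x(t, ω) = − V_{g'} x(t, ω), i.e. the derivative at t of s ↦ ∫_ℝ x(τ) · conj(g(τ − s)) · exp(−2πiωτ) dτ equals − ∫_ℝ x(τ) · conj(g'(τ − t)) · exp(−2πiωτ) dτ. -/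
open MeasureTheory Complex Real

/-- Frequency-invariant STFT:
`V_g x (t, ω) = ∫ τ, x τ * conj (g (τ - t)) * exp (-2πiωτ)`. -/
noncomputable def stftFreqInv (g x : ℝ → ℂ) (t ω : ℝ) : ℂ :=
  ∫ τ : ℝ, x τ * (starRingEnd ℂ) (g (τ - t)) *
    Complex.exp (-2 * Real.pi * Complex.I * (ω : ℂ) * (τ : ℂ))

section Helpers

lemma l2_mul_integrable {α : Type*} [MeasurableSpace α] {μ : Measure α} {f h : α → ℂ}
    (hf : MemLp f 2 μ) (hh : MemLp h 2 μ) : Integrable (fun a => f a * h a) μ := by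
  have h1 : Integrable (fun a => ‖f a‖ ^ 2) μ := (memLp_two_iff_integrable_sq_norm hf.1).mp hf
  have h2 : Integrable (fun a => ‖h a‖ ^ 2) μ := (memLp_two_iff_integrable_sq_norm hh.1).mp hh
  refine (h1.add h2).mono' (hf.1.mul hh.1) (ae_of_all _ fun a => ?_)
  simp only [Pi.add_apply, norm_mul]
  nlinarith [sq_nonneg (‖f a‖ - ‖h a‖), norm_nonneg (f a), norm_nonneg (h a)]

lemma conj_memL2 {α : Type*} [MeasurableSpace α] {μ : Measure α} {f : α → ℂ} (hf : MemLp f 2 μ) :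
    MemLp (fun a => (starRingEnd ℂ) (f a)) 2 μ := by
  refine hf.of_le_mul (c := 1) ?_ (ae_of_all _ fun a => by simp)
  exact Complex.continuous_conj.comp_aestronglyMeasurable hf.1

noncomputable def eker (ω : ℝ) (τ : ℝ) : ℂ :=
  Complex.exp (-2 * Real.pi * Complex.I * (ω : ℂ) * (τ : ℂ))

lemma eker_norm (ω τ : ℝ) : ‖eker ω τ‖ = 1 := by
  rw [eker]
  rw [Complex.norm_exp]
  have : (-2 * Real.pi * Complex.I * (ω : ℂ) * (τ : ℂ)).re = 0 := by simp
  simp [this]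

lemma eker_cont (ω : ℝ) : Continuous (eker ω) := by
  unfold eker; fun_prop

lemma phi_memL2 {x : ℝ → ℂ} (hx : MemLp x 2 (volume : Measure ℝ)) (ω : ℝ) :
    MemLp (fun τ => x τ * eker ω τ) 2 (volume : Measure ℝ) := by
  refine hx.of_le_mul (c := 1) (hx.1.mul ((eker_cont ω).aestronglyMeasurable)) (ae_of_all _ fun a => ?_)
  have := eker_norm ω a
  simp only [norm_mul, this, mul_one, one_mul, le_refl]

lemma stft_integrand_integrable {x h : ℝ → ℂ} (hx : MemLp x 2 (volume : Measure ℝ))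
    (hh : MemLp h 2 (volume : Measure ℝ)) (s ω : ℝ) :
    Integrable (fun τ => x τ * (starRingEnd ℂ) (h (τ - s)) * eker ω τ) volume := by
  have h2 : MemLp (fun τ => (starRingEnd ℂ) (h (τ - s))) 2 (volume : Measure ℝ) :=
    conj_memL2 (hh.comp_measurePreserving (measurePreserving_sub_right volume s))
  have := l2_mul_integrable (phi_memL2 hx ω) h2
  exact this.congr (ae_of_all _ fun τ => by ring)

-- continuity of translate in L2, giving continuity of u ↦ ∫ τ, x τ * conj (h (τ - u)) * eker ω τ
lemma stft_continuous {x h : ℝ → ℂ} (hx : MemLp x 2 (volume : Measure ℝ))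
    (hh : MemLp h 2 (volume : Measure ℝ)) (ω : ℝ) :
    Continuous (fun u => ∫ τ : ℝ, x τ * (starRingEnd ℂ) (h (τ - u)) * eker ω τ) := by
  have hφ : MemLp (fun τ => x τ * eker ω τ) 2 (volume : Measure ℝ) := phi_memL2 hx ω
  set Φ : Lp ℂ 2 (volume : Measure ℝ) := hφ.toLp _ with hΦ
  set H : Lp ℂ 2 (volume : Measure ℝ) := hh.toLp _ with hH
  have hmp : ∀ u : ℝ, MeasurePreserving (fun τ : ℝ => τ - u) volume volume :=
    fun u => measurePreserving_sub_right volume u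
  have hcmap : Continuous fun u : ℝ => (⟨fun τ => τ - u, by fun_prop⟩ : C(ℝ, ℝ)) := by
    apply ContinuousMap.continuous_of_continuous_uncurry
    exact continuous_fst.sub continuous_snd |>.comp (continuous_swap)
  set T : ℝ → Lp ℂ 2 (volume : Measure ℝ) := fun u =>
    Lp.compMeasurePreserving (⟨fun τ => τ - u, by fun_prop⟩ : C(ℝ, ℝ)) (hmp u) H with hT
  have hTcont : Continuous T :=
    Continuous.compMeasurePreservingLp continuous_const hcmap (fun u => hmp u) (by norm_num)
  have hinner : Continuous fun u => (inner ℂ (T u) Φ : ℂ) :=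
    (Continuous.inner hTcont continuous_const)
  have heq : ∀ u : ℝ, (inner ℂ (T u) Φ : ℂ)
      = ∫ τ : ℝ, x τ * (starRingEnd ℂ) (h (τ - u)) * eker ω τ := by
    intro u
    rw [MeasureTheory.L2.inner_def]
    have h1 : (T u : ℝ → ℂ) =ᵐ[volume] fun τ => h (τ - u) := by
      refine (Lp.coeFn_compMeasurePreserving _ _).trans ?_
      exact (hmp u).quasiMeasurePreserving.ae_eq_comp hh.coeFn_toLp
    have h2 : (Φ : ℝ → ℂ) =ᵐ[volume] fun τ => x τ * eker ω τ := hφ.coeFn_toLp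
    have h3 : (fun τ : ℝ => (inner ℂ ((T u : ℝ → ℂ) τ) ((Φ : ℝ → ℂ) τ) : ℂ))
        =ᵐ[volume] fun τ => x τ * (starRingEnd ℂ) (h (τ - u)) * eker ω τ := by
      filter_upwards [h1, h2] with τ e1 e2
      rw [e1, e2]
      simp only [RCLike.inner_apply]
      ring
    exact integral_congr_ae h3
  have : (fun u => ∫ τ : ℝ, x τ * (starRingEnd ℂ) (h (τ - u)) * eker ω τ)
      = fun u => (inner ℂ (T u) Φ : ℂ) := by
    funext u; exact (heq u).symm
  rw [this]; exact hinner

lemma swap_core {x g : ℝ → ℂ} (hx : MemLp x 2 (volume : Measure ℝ))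
    (hg_smooth : ContDiff ℝ 1 g)
    (hg' : MemLp (deriv g) 2 (volume : Measure ℝ)) (ω a b : ℝ) :
    ∫ τ : ℝ, (∫ u in Set.Ioc a b, x τ * (starRingEnd ℂ) (deriv g (τ - u)) * eker ω τ)
      = ∫ u in Set.Ioc a b, ∫ τ : ℝ, x τ * (starRingEnd ℂ) (deriv g (τ - u)) * eker ω τ := by
  set ν := (volume : Measure ℝ).restrict (Set.Ioc a b) with hν
  have hνfin : ν (Set.univ) < ⊤ := by
    rw [hν, Measure.restrict_apply_univ]
    exact measure_Ioc_lt_top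
  have hdgc : Continuous (deriv g) := hg_smooth.continuous_deriv le_rfl
  have hQc : Continuous fun z : ℝ × ℝ => (starRingEnd ℂ) (deriv g (z.1 - z.2)) :=
    Complex.continuous_conj.comp (hdgc.comp (continuous_fst.sub continuous_snd))
  -- P : z ↦ x z.1 * eker ω z.1 is MemLp 2 on prod
  have hφ := phi_memL2 hx ω
  have hPm : AEStronglyMeasurable (fun z : ℝ × ℝ => x z.1 * eker ω z.1) (volume.prod ν) := hφ.1.comp_fst
  have hP : MemLp (fun z : ℝ × ℝ => x z.1 * eker ω z.1) 2 (volume.prod ν) := by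
    rw [memLp_two_iff_integrable_sq_norm hPm]
    have h1 : Integrable (fun τ : ℝ => ‖x τ * eker ω τ‖ ^ 2) volume :=
      (memLp_two_iff_integrable_sq_norm hφ.1).mp hφ
    have h2 : Integrable (fun _ : ℝ => (1 : ℝ)) ν := by
      rw [hν]
      exact integrableOn_const measure_Ioc_lt_top.ne
    have := h1.mul_prod h2
    exact this.congr (ae_of_all _ fun z => by simp)
  -- Q : z ↦ conj (deriv g (z.1 - z.2)) is MemLp 2 on prod
  have hQ : MemLp (fun z : ℝ × ℝ => (starRingEnd ℂ) (deriv g (z.1 - z.2))) 2 (volume.prod ν) := by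
    rw [memLp_two_iff_integrable_sq_norm hQc.aestronglyMeasurable]
    have hsq : Integrable (fun τ : ℝ => ‖deriv g τ‖ ^ 2) volume :=
      (memLp_two_iff_integrable_sq_norm hg'.1).mp hg'
    rw [integrable_prod_iff' (f := fun z : ℝ × ℝ => ‖(starRingEnd ℂ) (deriv g (z.1 - z.2))‖ ^ 2) ((hQc.norm.pow 2).aestronglyMeasurable)]
    constructor
    · refine ae_of_all _ fun u => ?_
      have := (memLp_one_iff_integrable.mpr hsq).comp_measurePreserving
        (measurePreserving_sub_right volume u)
      have h2 := memLp_one_iff_integrable.mp this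
      exact h2.congr (ae_of_all _ fun τ => by simp)
    · have hval : ∀ u : ℝ, (∫ τ : ℝ, ‖‖(starRingEnd ℂ) (deriv g (τ - u))‖ ^ 2‖)
          = ∫ τ : ℝ, ‖deriv g τ‖ ^ 2 := by
        intro u
        rw [← integral_sub_right_eq_self (fun τ => ‖deriv g τ‖ ^ 2) u]
        congr 1; funext τ
        rw [Real.norm_of_nonneg (by positivity)]
        simp
      refine (integrable_congr (ae_of_all _ fun u => (hval u))).mpr ?_
      rw [hν]
      exact integrableOn_const measure_Ioc_lt_top.ne
  have hint : Integrable (Function.uncurry fun τ u =>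
      x τ * (starRingEnd ℂ) (deriv g (τ - u)) * eker ω τ) (volume.prod ν) := by
    have := l2_mul_integrable hP hQ
    exact this.congr (ae_of_all _ fun z => by simp [Function.uncurry]; ring)
  exact integral_integral_swap hint

lemma ftc_pt {g : ℝ → ℂ} (hg_smooth : ContDiff ℝ 1 g) (τ s t : ℝ) :
    g (τ - t) - g (τ - s) = ∫ u in t..s, deriv g (τ - u) := by
  have hdgc : Continuous (deriv g) := hg_smooth.continuous_deriv le_rfl
  have hder : ∀ u ∈ Set.uIcc t s, HasDerivAt (fun v => g (τ - v)) (-(deriv g (τ - u))) u := by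
    intro u _
    have h2 : HasDerivAt g (deriv g (τ - u)) (τ - u) :=
      (hg_smooth.differentiable one_ne_zero (τ - u)).hasDerivAt
    exact h2.comp_const_sub τ u
  have hint : IntervalIntegrable (fun u => -(deriv g (τ - u))) volume t s :=
    ((hdgc.comp (continuous_const.sub continuous_id)).neg).intervalIntegrable t s
  have h := intervalIntegral.integral_eq_sub_of_hasDerivAt hder hint
  rw [intervalIntegral.integral_neg] at h
  linear_combination h

lemma intervalIntegral_conj {f : ℝ → ℂ} {a b : ℝ} :
    ∫ u in a..b, (starRingEnd ℂ) (f u) = (starRingEnd ℂ) (∫ u in a..b, f u) := by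
  rw [intervalIntegral, intervalIntegral, integral_conj, integral_conj, map_sub]


end Helpers

/-- For `x ∈ L²` and `g` continuously differentiable with `g, g' ∈ L²`,
for every `ω` the map `t ↦ V_g x (t, ω)` is differentiable with derivative
`∂_t V_g x (t, ω) = − V_{g'} x (t, ω)`. -/
theorem stftFreqInv_hasDerivAt_time
    (x g : ℝ → ℂ)
    (hx : MemLp x 2 (volume : Measure ℝ))
    (hg_smooth : ContDiff ℝ 1 g)
    (hg : MemLp g 2 (volume : Measure ℝ))
    (hg' : MemLp (deriv g) 2 (volume : Measure ℝ)) :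
    ∀ ω t : ℝ,
      HasDerivAt (fun s : ℝ => stftFreqInv g x s ω)
        (-(stftFreqInv (deriv g) x t ω)) t := by
  intro ω t
  set F : ℝ → ℂ := fun u => ∫ τ : ℝ, x τ * (starRingEnd ℂ) (deriv g (τ - u)) * eker ω τ with hFdef
  have hFcont : Continuous F := stft_continuous hx hg' ω
  have hV : ∀ s : ℝ, stftFreqInv g x s ω
      = ∫ τ : ℝ, x τ * (starRingEnd ℂ) (g (τ - s)) * eker ω τ := fun s => rfl
  have hFt : stftFreqInv (deriv g) x t ω = F t := rfl
  have key : ∀ s : ℝ, stftFreqInv g x s ω = stftFreqInv g x t ω - ∫ u in t..s, F u := by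
    intro s
    have hIt := stft_integrand_integrable hx hg t ω
    have hIs := stft_integrand_integrable hx hg s ω
    have hVdiff : stftFreqInv g x t ω - stftFreqInv g x s ω
        = ∫ τ : ℝ, (x τ * (starRingEnd ℂ) (g (τ - t)) * eker ω τ
            - x τ * (starRingEnd ℂ) (g (τ - s)) * eker ω τ) := by
      rw [hV t, hV s]
      exact (integral_sub hIt hIs).symm
    have hpt : ∀ τ : ℝ,
        x τ * (starRingEnd ℂ) (g (τ - t)) * eker ω τ
          - x τ * (starRingEnd ℂ) (g (τ - s)) * eker ω τ
        = ∫ u in t..s, x τ * (starRingEnd ℂ) (deriv g (τ - u)) * eker ω τ := by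
      intro τ
      have h1 := ftc_pt hg_smooth τ s t
      calc x τ * (starRingEnd ℂ) (g (τ - t)) * eker ω τ
          - x τ * (starRingEnd ℂ) (g (τ - s)) * eker ω τ
          = x τ * (starRingEnd ℂ) (g (τ - t) - g (τ - s)) * eker ω τ := by
            rw [map_sub]; ring
        _ = x τ * (starRingEnd ℂ) (∫ u in t..s, deriv g (τ - u)) * eker ω τ := by rw [h1]
        _ = x τ * (∫ u in t..s, (starRingEnd ℂ) (deriv g (τ - u))) * eker ω τ := by
            rw [intervalIntegral_conj]
        _ = (∫ u in t..s, x τ * (starRingEnd ℂ) (deriv g (τ - u))) * eker ω τ := by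
            rw [intervalIntegral.integral_const_mul]
        _ = ∫ u in t..s, x τ * (starRingEnd ℂ) (deriv g (τ - u)) * eker ω τ := by
            rw [intervalIntegral.integral_mul_const]
    have hswap : ∫ τ : ℝ, (∫ u in t..s, x τ * (starRingEnd ℂ) (deriv g (τ - u)) * eker ω τ)
        = ∫ u in t..s, F u := by
      rcases le_total t s with hts | hst
      · have e1 : ∀ τ : ℝ, (∫ u in t..s, x τ * (starRingEnd ℂ) (deriv g (τ - u)) * eker ω τ)
            = ∫ u in Set.Ioc t s, x τ * (starRingEnd ℂ) (deriv g (τ - u)) * eker ω τ :=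
          fun τ => intervalIntegral.integral_of_le hts
        simp only [e1]
        rw [swap_core hx hg_smooth hg' ω t s, intervalIntegral.integral_of_le hts]
      · have e1 : ∀ τ : ℝ, (∫ u in t..s, x τ * (starRingEnd ℂ) (deriv g (τ - u)) * eker ω τ)
            = -∫ u in Set.Ioc s t, x τ * (starRingEnd ℂ) (deriv g (τ - u)) * eker ω τ := by
          intro τ
          rw [intervalIntegral.integral_symm, intervalIntegral.integral_of_le hst]
        simp only [e1]
        rw [integral_neg, swap_core hx hg_smooth hg' ω s t,
          intervalIntegral.integral_symm s t, intervalIntegral.integral_of_le hst]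
    have : stftFreqInv g x t ω - stftFreqInv g x s ω = ∫ u in t..s, F u := by
      rw [hVdiff]
      rw [integral_congr_ae (ae_of_all _ hpt)]
      exact hswap
    linear_combination -this
  have h1 : HasDerivAt (fun s : ℝ => ∫ u in t..s, F u) (F t) t :=
    intervalIntegral.integral_hasDerivAt_right (hFcont.intervalIntegrable t t)
      (hFcont.stronglyMeasurableAtFilter volume (nhds t)) hFcont.continuousAt
  have h2 : HasDerivAt (fun s : ℝ => stftFreqInv g x t ω - ∫ u in t..s, F u)
      (-(F t)) t := by
    simpa using (h1.const_sub (stftFreqInv g x t ω))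
  rw [hFt]
  exact h2.congr_of_eventuallyEq (Filter.Eventually.of_forall fun s => key s)
end

section
/- Let x ∈ L²(ℝ, ℂ) and let g : ℝ → ℂ be such that g ∈ L²(ℝ) and the time-weighted window Tg, given by Tg(τ) = τ·g(τ), is in L²(ℝ). Then for every t ∈ ℝ, the function ω ↦ V_g x(t, ω) is differentiable on ℝ, and its derivative satisfies ∂/∂ω V_g x(t, ω) = −2πi · ( V_{Tg} x(t, ω) + t · V_g x(t, ω) ). -/
open MeasureTheory Complex Real FourierTransform

/-- Product of an `L²` function with the conjugate of a shifted `L²` function is integrable. -/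
lemma l2_mul_conj_integrable (x h : ℝ → ℂ)
    (hx : MemLp x 2 (volume : Measure ℝ))
    (hh : MemLp h 2 (volume : Measure ℝ)) (t : ℝ) :
    Integrable (fun τ : ℝ => x τ * (starRingEnd ℂ) (h (τ - t))) volume := by
  have hmp : MeasurePreserving (fun τ : ℝ => τ - t) volume volume := by
    simpa [sub_eq_add_neg] using measurePreserving_add_right (volume : Measure ℝ) (-t)
  have hshift : MemLp (fun τ : ℝ => h (τ - t)) 2 (volume : Measure ℝ) :=
    hh.comp_measurePreserving hmp
  have hconj : MemLp (fun τ : ℝ => (starRingEnd ℂ) (h (τ - t))) 2 (volume : Measure ℝ) := by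
    refine ⟨Complex.continuous_conj.comp_aestronglyMeasurable hshift.1, ?_⟩
    rw [← eLpNorm_norm]
    simp only [RCLike.norm_conj]
    rw [eLpNorm_norm]
    exact hshift.2
  have := hconj.smul (φ := x) hx (p := 2) (q := 2) (r := 1)
  rw [memLp_one_iff_integrable] at this
  simpa [Pi.smul_apply, smul_eq_mul, Pi.mul_def] using this

lemma char_norm_one (ω τ : ℝ) :
    ‖Complex.exp (-2 * Real.pi * Complex.I * (ω : ℂ) * (τ : ℂ))‖ = 1 := by
  rw [show (-2 * Real.pi * Complex.I * (ω : ℂ) * (τ : ℂ))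
      = ((-2 * Real.pi * ω * τ : ℝ) : ℂ) * Complex.I by push_cast; ring]
  simpa using Complex.norm_exp_ofReal_mul_I (-2 * Real.pi * ω * τ)

lemma integrable_mul_char (f : ℝ → ℂ) (hf : Integrable f volume) (ω : ℝ) :
    Integrable (fun τ : ℝ =>
      f τ * Complex.exp (-2 * Real.pi * Complex.I * (ω : ℂ) * (τ : ℂ))) volume := by
  have : Integrable (fun τ : ℝ =>
      Complex.exp (-2 * Real.pi * Complex.I * (ω : ℂ) * (τ : ℂ)) * f τ) volume := by
    refine hf.bdd_mul (c := 1) ?_ (Filter.Eventually.of_forall fun τ => le_of_eq (char_norm_one ω τ))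
    exact (Complex.continuous_exp.comp (by continuity)).aestronglyMeasurable
  simpa [mul_comm] using this

/-- For `x ∈ L²` and `g` with `g, Tg ∈ L²` (where `Tg τ = τ • g τ`),
for every `t` the map `ω ↦ V_g x (t, ω)` is differentiable with derivative
`∂_ω V_g x (t, ω) = −2πi (V_{Tg} x (t, ω) + t · V_g x (t, ω))`. -/
theorem stftFreqInv_hasDerivAt_freq
    (x g : ℝ → ℂ)
    (hx : MemLp x 2 (volume : Measure ℝ))
    (hg : MemLp g 2 (volume : Measure ℝ))
    (hTg : MemLp (fun τ : ℝ => (τ : ℂ) * g τ) 2 (volume : Measure ℝ)) :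
    ∀ t ω : ℝ,
      HasDerivAt (fun ν : ℝ => stftFreqInv g x t ν)
        (-2 * Real.pi * Complex.I *
          (stftFreqInv (fun τ : ℝ => (τ : ℂ) * g τ) x t ω +
            (t : ℂ) * stftFreqInv g x t ω)) ω := by
  intro t ω
  set F : ℝ → ℂ := fun τ => x τ * (starRingEnd ℂ) (g (τ - t)) with hFdef
  have hF : Integrable F volume := l2_mul_conj_integrable x g hx hg t
  have hFT : Integrable (fun τ : ℝ => x τ *
      (starRingEnd ℂ) (((τ - t : ℝ) : ℂ) * g (τ - t))) volume :=
    l2_mul_conj_integrable x (fun τ : ℝ => (τ : ℂ) * g τ) hx hTg t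
  have hF' : Integrable (fun τ : ℝ => τ • F τ) volume := by
    have h1 : Integrable (fun τ : ℝ => x τ *
        (starRingEnd ℂ) (((τ - t : ℝ) : ℂ) * g (τ - t)) + (t : ℂ) * F τ) volume :=
      hFT.add (hF.const_mul _)
    refine h1.congr (Filter.Eventually.of_forall fun τ => ?_)
    simp only [hFdef, map_mul, Complex.conj_ofReal, Complex.real_smul]
    push_cast
    ring
  have hfun : (fun ν : ℝ => stftFreqInv g x t ν) = 𝓕 F := by
    funext ν
    rw [Real.fourier_real_eq_integral_exp_smul]
    unfold stftFreqInv
    congr 1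
    funext τ
    rw [smul_eq_mul, mul_comm]
    congr 2
    push_cast
    ring
  have hd := Real.hasDerivAt_fourier hF hF' ω
  rw [← hfun] at hd
  refine hd.congr_deriv (Eq.symm ?_)
  rw [Real.fourier_real_eq_integral_exp_smul]
  unfold stftFreqInv
  rw [← integral_const_mul, ← integral_add (integrable_mul_char _ hFT ω)
    ((integrable_mul_char _ hF ω).const_mul _), ← integral_const_mul]
  congr 1
  funext τ
  simp only [hFdef, smul_eq_mul, map_mul, Complex.conj_ofReal]
  rw [show ((-2 * π * τ * ω : ℝ) : ℂ) * Complex.I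
      = -2 * (π : ℂ) * Complex.I * (ω : ℂ) * (τ : ℂ) by push_cast; ring]
  push_cast
  ring
end

section
/- (CIF formula of Proposition 1.) Let x ∈ L²(ℝ, ℂ) and let g : ℝ → ℂ be continuously differentiable with g ∈ L²(ℝ) and g' ∈ L²(ℝ). Fix ω ∈ ℝ and suppose there are r, Φ : ℝ → ℝ with V_g x(s, ω) = r(s) · exp(2πi·Φ(s)) for all s in a neighbourhood of t, where r and Φ are differentiable at t and r(t) > 0. Then the channelized instantaneous frequency satisfies Φ'(t) = −(1/(2π)) · Im( V_{g'} x(t, ω) / V_g x(t, ω) ). -/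
open MeasureTheory Complex Real Filter

open Set
open scoped ENNReal ComplexConjugate InnerProductSpace


noncomputable def trMap (s : ℝ) : C(ℝ, ℝ) := ⟨fun τ => τ - s, by continuity⟩

lemma trMap_mp (s : ℝ) : MeasurePreserving (trMap s) (volume : Measure ℝ) volume :=
  measurePreserving_sub_right volume s

noncomputable def trLp (f : ℝ → ℂ) (hf : MemLp f 2 (volume : Measure ℝ)) (s : ℝ) :
    Lp ℂ 2 (volume : Measure ℝ) :=
  Lp.compMeasurePreserving (trMap s) (trMap_mp s) (hf.toLp f)

lemma trLp_coeFn (f : ℝ → ℂ) (hf : MemLp f 2 (volume : Measure ℝ)) (s : ℝ) :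
    (trLp f hf s : ℝ → ℂ) =ᵐ[volume] fun τ => f (τ - s) :=
  (Lp.coeFn_compMeasurePreserving _ _).trans
    ((trMap_mp s).quasiMeasurePreserving.ae_eq_comp (hf.coeFn_toLp))

lemma trLp_continuous (f : ℝ → ℂ) (hf : MemLp f 2 (volume : Measure ℝ)) :
    Continuous (trLp f hf) := by
  apply Continuous.compMeasurePreservingLp
  · exact continuous_const
  · exact ContinuousMap.continuous_of_continuous_uncurry _
      (by simp only [trMap, ContinuousMap.coe_mk, Function.uncurry]; fun_prop)
  · exact ENNReal.ofNat_ne_top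

-- key quantitative bound
lemma key_bound (g : ℝ → ℂ) (hg_smooth : ContDiff ℝ 1 g)
    (hg' : MemLp (deriv g) 2 (volume : Measure ℝ)) (t s : ℝ) (c : ℝ≥0∞)
    (hc : ∀ u ∈ uIcc t s, edist (trLp (deriv g) hg' u) (trLp (deriv g) hg' t) ≤ c) :
    eLpNorm (fun τ => g (τ - s) - g (τ - t) + (s - t) • deriv g (τ - t)) 2 volume
      ≤ ENNReal.ofReal |s - t| * c := by
  have hgc : Continuous (deriv g) := hg_smooth.continuous_deriv le_rfl
  set q : ℝ → ℝ → ℂ := fun τ u => deriv g (τ - t) - deriv g (τ - u) with hq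
  have hqc : Continuous fun p : ℝ × ℝ => q p.1 p.2 := by fun_prop
  -- FTC
  have hFTC : ∀ τ, g (τ - s) - g (τ - t) + (s - t) • deriv g (τ - t)
      = ∫ u in t..s, q τ u := by
    intro τ
    have h1 : ∀ u ∈ uIcc t s, HasDerivAt (fun u => g (τ - u)) (-deriv g (τ - u)) u := by
      intro u _
      have hgd : HasDerivAt g (deriv g (τ - u)) (τ - u) :=
        ((hg_smooth.differentiable one_ne_zero) (τ - u)).hasDerivAt
      have hin : HasDerivAt (fun u : ℝ => τ - u) (-1) u := by
        simpa using (hasDerivAt_id u).const_sub τ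
      have := HasDerivAt.scomp u hgd hin
      simp at this; exact this
    have hint : IntervalIntegrable (fun u => -deriv g (τ - u)) volume t s := by
      apply Continuous.intervalIntegrable; fun_prop
    have h2 := intervalIntegral.integral_eq_sub_of_hasDerivAt h1 hint
    have h4 : IntervalIntegrable (fun _ : ℝ => deriv g (τ - t)) volume t s :=
      intervalIntegrable_const
    have h3 : ∫ u in t..s, q τ u
        = (∫ u in t..s, (deriv g (τ - t))) + ∫ u in t..s, -deriv g (τ - u) := by
      rw [← intervalIntegral.integral_add h4 hint]
      apply intervalIntegral.integral_congr
      intro u _; simp only [hq]; ring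
    rw [h3, h2, intervalIntegral.integral_const]
    simp only [ContinuousMap.coe_mk, real_smul]
    push_cast
    ring
  set A : Set ℝ := uIoc t s with hA
  have hAvol : volume A ≤ ENNReal.ofReal |s - t| := by
    rw [hA, uIoc, Real.volume_Ioc]
    apply ENNReal.ofReal_le_ofReal
    rw [abs_sub_comm, ← max_sub_min_eq_abs]
    rw [max_comm, min_comm]
  have hAmeas : MeasurableSet A := measurableSet_uIoc
  -- pointwise estimate
  have hptwise : ∀ τ : ℝ, (‖g (τ - s) - g (τ - t) + (s - t) • deriv g (τ - t)‖₊ : ℝ≥0∞)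
      ≤ ∫⁻ u in A, ‖q τ u‖₊ := by
    intro τ
    rw [hFTC τ, ← ENNReal.ofReal_coe_nnreal, coe_nnnorm]
    have e1 : ‖∫ u in t..s, q τ u‖ ≤ |∫ u in t..s, ‖q τ u‖| :=
      intervalIntegral.norm_integral_le_abs_integral_norm
    have hInt : IntegrableOn (fun u => q τ u) A volume := by
      apply Continuous.integrableOn_uIoc; fun_prop
    have e2 : |∫ u in t..s, ‖q τ u‖| = ∫ u in A, ‖q τ u‖ := by
      rw [intervalIntegral.intervalIntegral_eq_integral_uIoc, smul_eq_mul, abs_mul]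
      have h0 : (0:ℝ) ≤ ∫ u in A, ‖q τ u‖ :=
        setIntegral_nonneg hAmeas fun u _ => norm_nonneg _
      split_ifs
      · rw [abs_one, one_mul, _root_.abs_of_nonneg h0]
      · rw [abs_neg, abs_one, one_mul, _root_.abs_of_nonneg h0]
    have e3 : ENNReal.ofReal (∫ u in A, ‖q τ u‖) = ∫⁻ u in A, ‖q τ u‖₊ :=
      ofReal_integral_norm_eq_lintegral_enorm hInt
    calc ENNReal.ofReal ‖∫ u in t..s, q τ u‖
        ≤ ENNReal.ofReal (∫ u in A, ‖q τ u‖) := by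
          apply ENNReal.ofReal_le_ofReal; rw [← e2]; exact e1
      _ = _ := e3
  -- Cauchy–Schwarz pointwise in τ
  have h22 : Real.HolderConjugate 2 2 := Real.HolderConjugate.two_two
  have hqm : Measurable fun p : ℝ × ℝ => (‖q p.1 p.2‖₊ : ℝ≥0∞) :=
    hqc.measurable.nnnorm.coe_nnreal_ennreal
  have hCS : ∀ τ : ℝ, (∫⁻ u in A, (‖q τ u‖₊ : ℝ≥0∞)) ^ (2:ℝ)
      ≤ (∫⁻ u in A, (‖q τ u‖₊ : ℝ≥0∞) ^ (2:ℝ)) * volume A := by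
    intro τ
    have hm : AEMeasurable (fun u => (‖q τ u‖₊ : ℝ≥0∞)) (volume.restrict A) := by
      exact (hqm.comp (measurable_const.prodMk measurable_id)).aemeasurable
    have := ENNReal.lintegral_mul_le_Lp_mul_Lq (volume.restrict A) h22
      hm (aemeasurable_const (b := (1:ℝ≥0∞)))
    simp only [Pi.mul_apply, mul_one, ENNReal.one_rpow, lintegral_const,
      Measure.restrict_apply_univ] at this
    calc (∫⁻ u in A, (‖q τ u‖₊ : ℝ≥0∞)) ^ (2:ℝ)
        ≤ ((∫⁻ u in A, (‖q τ u‖₊ : ℝ≥0∞) ^ (2:ℝ)) ^ (1/(2:ℝ)) * (volume A) ^ (1/(2:ℝ))) ^ (2:ℝ) := by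
          gcongr
          rw [one_mul] at this
          exact this
      _ = _ := by
          rw [ENNReal.mul_rpow_of_nonneg _ _ (by norm_num : (0:ℝ) ≤ 2),
            ← ENNReal.rpow_mul, ← ENNReal.rpow_mul]
          norm_num
  -- inner bound from hc
  have hinner : ∀ u ∈ A, (∫⁻ τ : ℝ, (‖q τ u‖₊ : ℝ≥0∞) ^ (2:ℝ)) ≤ c ^ (2:ℝ) := by
    intro u hu
    have hce := hc u (uIoc_subset_uIcc hu)
    have he : edist (trLp (deriv g) hg' u) (trLp (deriv g) hg' t)
        = (∫⁻ τ : ℝ, (‖q τ u‖₊ : ℝ≥0∞) ^ (2:ℝ)) ^ (1/(2:ℝ)) := by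
      have hab : (⇑(trLp (deriv g) hg' u) - ⇑(trLp (deriv g) hg' t)) =ᵐ[volume]
          fun τ => deriv g (τ - u) - deriv g (τ - t) := by
        filter_upwards [trLp_coeFn (deriv g) hg' u, trLp_coeFn (deriv g) hg' t] with τ h1 h2
        simp [h1, h2]
      rw [Lp.edist_def, eLpNorm_congr_ae hab,
        eLpNorm_eq_lintegral_rpow_enorm_toReal (by norm_num) ENNReal.ofNat_ne_top]
      simp only [ENNReal.toReal_ofNat]
      congr 1
      apply lintegral_congr
      intro τ
      congr 1
      simp only [hq]
      rw [← neg_sub]; exact enorm_neg (E := ℂ) _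
    have : (∫⁻ τ : ℝ, (‖q τ u‖₊ : ℝ≥0∞) ^ (2:ℝ)) ^ (1/(2:ℝ)) ≤ c := he ▸ hce
    calc (∫⁻ τ : ℝ, (‖q τ u‖₊ : ℝ≥0∞) ^ (2:ℝ))
        = ((∫⁻ τ : ℝ, (‖q τ u‖₊ : ℝ≥0∞) ^ (2:ℝ)) ^ (1/(2:ℝ))) ^ (2:ℝ) := by
          rw [← ENNReal.rpow_mul]; norm_num
      _ ≤ c ^ (2:ℝ) := by gcongr
  -- put everything together
  have hswap : (∫⁻ τ : ℝ, ∫⁻ u in A, (‖q τ u‖₊ : ℝ≥0∞) ^ (2:ℝ))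
      = ∫⁻ u in A, ∫⁻ τ : ℝ, (‖q τ u‖₊ : ℝ≥0∞) ^ (2:ℝ) := by
    apply lintegral_lintegral_swap
    exact (hqm.pow_const _).aemeasurable
  have hmain : (∫⁻ τ : ℝ, (‖g (τ - s) - g (τ - t) + (s - t) • deriv g (τ - t)‖₊ : ℝ≥0∞) ^ (2:ℝ))
      ≤ (ENNReal.ofReal |s - t| * c) ^ (2:ℝ) := by
    calc (∫⁻ τ : ℝ, (‖g (τ - s) - g (τ - t) + (s - t) • deriv g (τ - t)‖₊ : ℝ≥0∞) ^ (2:ℝ))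
        ≤ ∫⁻ τ : ℝ, (∫⁻ u in A, (‖q τ u‖₊ : ℝ≥0∞)) ^ (2:ℝ) := by
          apply lintegral_mono
          intro τ
          exact ENNReal.rpow_le_rpow (hptwise τ) (by norm_num)
      _ ≤ ∫⁻ τ : ℝ, (∫⁻ u in A, (‖q τ u‖₊ : ℝ≥0∞) ^ (2:ℝ)) * volume A :=
          lintegral_mono hCS
      _ = (∫⁻ τ : ℝ, ∫⁻ u in A, (‖q τ u‖₊ : ℝ≥0∞) ^ (2:ℝ)) * volume A :=
          lintegral_mul_const' _ _ (hAvol.trans_lt ENNReal.ofReal_lt_top).ne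
      _ = (∫⁻ u in A, ∫⁻ τ : ℝ, (‖q τ u‖₊ : ℝ≥0∞) ^ (2:ℝ)) * volume A := by rw [hswap]
      _ ≤ (∫⁻ _ in A, c ^ (2:ℝ)) * volume A :=
          mul_le_mul_left (setLIntegral_mono' hAmeas hinner) _
      _ = c ^ (2:ℝ) * volume A * volume A := by rw [setLIntegral_const]
      _ ≤ c ^ (2:ℝ) * ENNReal.ofReal |s - t| * ENNReal.ofReal |s - t| := by gcongr
      _ = (ENNReal.ofReal |s - t| * c) ^ (2:ℝ) := by
          rw [ENNReal.mul_rpow_of_nonneg _ _ (by norm_num : (0:ℝ) ≤ 2)]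
          rw [show ((2:ℝ)) = ((2:ℕ):ℝ) by norm_num, ENNReal.rpow_natCast,
            ENNReal.rpow_natCast]
          ring
  rw [eLpNorm_eq_lintegral_rpow_enorm_toReal (by norm_num) ENNReal.ofNat_ne_top]
  rw [ENNReal.toReal_ofNat]
  calc (∫⁻ τ : ℝ, (‖g (τ - s) - g (τ - t) + (s - t) • deriv g (τ - t)‖₊ : ℝ≥0∞) ^ (2:ℝ)) ^ (1/(2:ℝ))
      ≤ ((ENNReal.ofReal |s - t| * c) ^ (2:ℝ)) ^ (1/(2:ℝ)) :=
        ENNReal.rpow_le_rpow hmain (by norm_num)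
    _ = ENNReal.ofReal |s - t| * c := by rw [← ENNReal.rpow_mul]; norm_num

lemma trLp_hasDerivAt (g : ℝ → ℂ) (hg_smooth : ContDiff ℝ 1 g)
    (hg : MemLp g 2 (volume : Measure ℝ)) (hg' : MemLp (deriv g) 2 (volume : Measure ℝ))
    (t : ℝ) :
    HasDerivAt (trLp g hg) (-(trLp (deriv g) hg' t)) t := by
  rw [hasDerivAt_iff_isLittleO, Asymptotics.isLittleO_iff]
  intro c hc
  have hcont : ContinuousAt (trLp (deriv g) hg') t := (trLp_continuous _ _).continuousAt
  have h1 : ∀ᶠ u in nhds t,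
      edist (trLp (deriv g) hg' u) (trLp (deriv g) hg' t) ≤ ENNReal.ofReal c := by
    filter_upwards [EMetric.tendsto_nhds.mp hcont (ENNReal.ofReal c)
      (ENNReal.ofReal_pos.mpr hc)] with u hu
    exact hu.le
  obtain ⟨δ, hδ, hball⟩ := Metric.eventually_nhds_iff_ball.mp h1
  have h2 : ∀ᶠ s in nhds t, ∀ u ∈ uIcc t s,
      edist (trLp (deriv g) hg' u) (trLp (deriv g) hg' t) ≤ ENNReal.ofReal c := by
    filter_upwards [Metric.ball_mem_nhds t hδ] with s hs u hu
    exact hball u (((convex_ball t δ).ordConnected.uIcc_subset (Metric.mem_ball_self hδ) hs) hu)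
  filter_upwards [h2] with s hs
  have hX : (⇑(trLp g hg s - trLp g hg t - (s - t) • (-(trLp (deriv g) hg' t)))) =ᵐ[volume]
      fun τ => g (τ - s) - g (τ - t) + (s - t) • deriv g (τ - t) := by
    have e2 := Lp.coeFn_sub (trLp g hg s - trLp g hg t) ((s - t) • (-(trLp (deriv g) hg' t)))
    have e1 := Lp.coeFn_sub (trLp g hg s) (trLp g hg t)
    have e3 := Lp.coeFn_smul (s - t) (-(trLp (deriv g) hg' t))
    have e4 := Lp.coeFn_neg (trLp (deriv g) hg' t)
    filter_upwards [e1, e2, e3, e4, trLp_coeFn g hg s, trLp_coeFn g hg t,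
      trLp_coeFn (deriv g) hg' t] with τ h1' h2' h3' h4' h5' h6' h7'
    rw [h2', Pi.sub_apply, h1', Pi.sub_apply, h3', Pi.smul_apply, h4', Pi.neg_apply, h5', h6', h7']
    simp only [smul_neg, sub_neg_eq_add]
  rw [Lp.norm_def, eLpNorm_congr_ae hX]
  have hkb := key_bound g hg_smooth hg' t s (ENNReal.ofReal c) hs
  calc (eLpNorm (fun τ => g (τ - s) - g (τ - t) + (s - t) • deriv g (τ - t)) 2 volume).toReal
      ≤ (ENNReal.ofReal |s - t| * ENNReal.ofReal c).toReal := by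
        apply ENNReal.toReal_mono _ hkb
        finiteness
    _ ≤ c * ‖s - t‖ := by
        rw [← ENNReal.ofReal_mul (abs_nonneg _), ENNReal.toReal_ofReal
          (mul_nonneg (abs_nonneg _) hc.le), Real.norm_eq_abs]
        rw [mul_comm]



noncomputable def eFun (ω : ℝ) : ℝ → ℂ := fun τ =>
  Complex.exp (-2 * Real.pi * Complex.I * (ω : ℂ) * (τ : ℂ))

lemma eFun_cont (ω : ℝ) : Continuous (eFun ω) := by unfold eFun; fun_prop

lemma norm_eFun (ω τ : ℝ) : ‖eFun ω τ‖ = 1 := by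
  unfold eFun
  rw [Complex.norm_exp]
  norm_num

lemma xe_mem (x : ℝ → ℂ) (hx : MemLp x 2 (volume : Measure ℝ)) (ω : ℝ) :
    MemLp (fun τ => x τ * eFun ω τ) 2 (volume : Measure ℝ) := by
  constructor
  · exact hx.1.mul (eFun_cont ω).aestronglyMeasurable
  · have : eLpNorm (fun τ => x τ * eFun ω τ) 2 volume = eLpNorm x 2 volume := by
      apply eLpNorm_congr_norm_ae
      filter_upwards with τ
      rw [norm_mul, norm_eFun, mul_one]
    rw [this]; exact hx.2

section Lfun
variable (x : ℝ → ℂ) (hx : MemLp x 2 (volume : Measure ℝ)) (ω : ℝ)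

noncomputable def Lfun : Lp ℂ 2 (volume : Measure ℝ) →L[ℝ] ℂ :=
  (Complex.conjCLE : ℂ ≃L[ℝ] ℂ).toContinuousLinearMap.comp
    ((innerSL ℂ ((xe_mem x hx ω).toLp _)).restrictScalars ℝ)

lemma Lfun_apply (f : Lp ℂ 2 (volume : Measure ℝ)) (φ : ℝ → ℂ)
    (hφ : (f : ℝ → ℂ) =ᵐ[volume] φ) :
    Lfun x hx ω f = ∫ τ : ℝ, x τ * (starRingEnd ℂ) (φ τ) * eFun ω τ := by
  have h1 : Lfun x hx ω f = conj (⟪((xe_mem x hx ω).toLp _ : Lp ℂ 2 (volume : Measure ℝ)), f⟫_ℂ) := rfl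
  rw [h1, MeasureTheory.L2.inner_def, ← integral_conj]
  apply integral_congr_ae
  filter_upwards [hφ, (xe_mem x hx ω).coeFn_toLp] with τ h2 h3
  rw [RCLike.inner_apply, h2, h3, map_mul, Complex.conj_conj]
  ring
end Lfun


/-- CIF formula of Proposition 1: For `x ∈ L²`, `g` continuously
differentiable with `g, g' ∈ L²`, if near `t` we have the polar decomposition
`V_g x (·, ω) = r · exp(2πiΦ)` with `r`, `Φ` differentiable at `t` and `r t > 0`, then
`Φ' t = −(1/(2π)) · Im (V_{g'} x (t, ω) / V_g x (t, ω))`. -/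
theorem cif_formula
    (x g : ℝ → ℂ)
    (hx : MemLp x 2 (volume : Measure ℝ))
    (hg_smooth : ContDiff ℝ 1 g)
    (hg : MemLp g 2 (volume : Measure ℝ))
    (hg' : MemLp (deriv g) 2 (volume : Measure ℝ))
    (ω t : ℝ) (r Φ : ℝ → ℝ) (r' Φ' : ℝ)
    (hpolar : ∀ᶠ s in nhds t,
      stftFreqInv g x s ω =
        (r s : ℂ) * Complex.exp (2 * Real.pi * Complex.I * (Φ s : ℂ)))
    (hr : HasDerivAt r r' t)
    (hΦ : HasDerivAt Φ Φ' t)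
    (hrpos : 0 < r t) :
    Φ' = -(1 / (2 * Real.pi)) *
      (stftFreqInv (deriv g) x t ω / stftFreqInv g x t ω).im := by
  -- identification of the STFT with the linear functional applied to translated window
  have hFeq : ∀ (f : ℝ → ℂ) (hf : MemLp f 2 (volume : Measure ℝ)) (s : ℝ),
      stftFreqInv f x s ω = Lfun x hx ω (trLp f hf s) := by
    intro f hf s
    rw [Lfun_apply x hx ω _ _ (trLp_coeFn f hf s)]
    rfl
  have hDeriv : HasDerivAt (fun s => stftFreqInv g x s ω)
      (-(stftFreqInv (deriv g) x t ω)) t := by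
    have h := ((Lfun x hx ω).hasFDerivAt).comp_hasDerivAt t
      (trLp_hasDerivAt g hg_smooth hg hg' t)
    have hval : (Lfun x hx ω) (-(trLp (deriv g) hg' t))
        = -(stftFreqInv (deriv g) x t ω) := by
      rw [map_neg, hFeq (deriv g) hg' t]
    rw [hval] at h
    exact h.congr_of_eventuallyEq (Eventually.of_forall fun s => hFeq g hg s)
  set E : ℂ := Complex.exp (2 * Real.pi * Complex.I * (Φ t : ℂ)) with hE
  have hrC : HasDerivAt (fun s => ((r s : ℝ) : ℂ)) (r' : ℂ) t := hr.ofReal_comp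
  have hΦC : HasDerivAt (fun s => ((Φ s : ℝ) : ℂ)) (Φ' : ℂ) t := hΦ.ofReal_comp
  have hexp : HasDerivAt (fun s => Complex.exp (2 * Real.pi * Complex.I * (Φ s : ℂ)))
      (E * (2 * Real.pi * Complex.I * (Φ' : ℂ))) t := by
    have h2 : HasDerivAt (fun s => 2 * (Real.pi : ℂ) * Complex.I * (Φ s : ℂ))
        (2 * (Real.pi : ℂ) * Complex.I * (Φ' : ℂ)) t := hΦC.const_mul _
    exact h2.cexp
  have hpd : HasDerivAt (fun s => (r s : ℂ) * Complex.exp (2 * Real.pi * Complex.I * (Φ s : ℂ)))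
      ((r' : ℂ) * E + (r t : ℂ) * (E * (2 * Real.pi * Complex.I * (Φ' : ℂ)))) t :=
    hrC.mul hexp
  have hpd' : HasDerivAt (fun s => stftFreqInv g x s ω)
      ((r' : ℂ) * E + (r t : ℂ) * (E * (2 * Real.pi * Complex.I * (Φ' : ℂ)))) t :=
    hpd.congr_of_eventuallyEq hpolar
  have hEq : -(stftFreqInv (deriv g) x t ω)
      = (r' : ℂ) * E + (r t : ℂ) * (E * (2 * Real.pi * Complex.I * (Φ' : ℂ))) :=
    hDeriv.unique hpd'
  have hV : stftFreqInv g x t ω = (r t : ℂ) * E := hpolar.self_of_nhds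
  have hEne : E ≠ 0 := Complex.exp_ne_zero _
  have hrt : ((r t : ℝ) : ℂ) ≠ 0 := by
    simpa using ne_of_gt hrpos
  have hdiv : stftFreqInv (deriv g) x t ω / stftFreqInv g x t ω
      = -(((r' / r t : ℝ)) : ℂ) - 2 * Real.pi * Complex.I * (Φ' : ℂ) := by
    have hV' : stftFreqInv (deriv g) x t ω
        = -((r' : ℂ) * E + (r t : ℂ) * (E * (2 * Real.pi * Complex.I * (Φ' : ℂ)))) := by
      rw [← hEq, neg_neg]
    rw [hV', hV]
    push_cast
    field_simp
    ring
  rw [hdiv]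
  have him : (-(((r' / r t : ℝ)) : ℂ) - 2 * Real.pi * Complex.I * (Φ' : ℂ)).im
      = -(2 * Real.pi * Φ') := by
    simp
  rw [him]
  field_simp
end

section
/- (Lemma 1, CIF of a sinusoid.) Let ξ₀ ∈ ℝ and x(τ) = exp(2πi·ξ₀·τ). Let g : ℝ → ℂ be continuously differentiable with g ∈ L¹(ℝ) and g' ∈ L¹(ℝ). Then for all t, ω ∈ ℝ with ĝ(ξ₀ − ω) ≠ 0 (where ĝ(ξ) = ∫_ℝ g(u)·exp(−2πiξu) du), the channelized instantaneous frequency computed from the frequency-invariant STFT satisfies −(1/(2π)) · Im( V_{g'} x(t, ω) / V_g x(t, ω) ) = ξ₀ − ω. -/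
open MeasureTheory Complex Real

/-- The Fourier transform `ĝ ξ = ∫ u, g u * exp(-2πiξu)`. -/
noncomputable def fourierTf (g : ℝ → ℂ) (ξ : ℝ) : ℂ :=
  ∫ u : ℝ, g u * Complex.exp (-2 * Real.pi * Complex.I * (ξ : ℂ) * (u : ℂ))

lemma fourierTf_eq (g : ℝ → ℂ) (ξ : ℝ) : fourierTf g ξ = FourierTransform.fourier g ξ := by
  rw [Real.fourier_real_eq_integral_exp_smul, fourierTf]
  congr 1
  ext u
  rw [smul_eq_mul, mul_comm]
  congr 1
  push_cast
  ring_nf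

lemma stft_sinusoid (g : ℝ → ℂ) (ξ₀ t ω : ℝ) :
    stftFreqInv g (fun τ : ℝ => Complex.exp (2 * Real.pi * Complex.I * (ξ₀ : ℂ) * (τ : ℂ))) t ω
      = Complex.exp (2 * Real.pi * Complex.I * ((ξ₀ - ω : ℝ) : ℂ) * (t : ℂ)) *
        (starRingEnd ℂ) (fourierTf g (ξ₀ - ω)) := by
  have key : ∀ τ : ℝ,
      Complex.exp (2 * Real.pi * Complex.I * (ξ₀ : ℂ) * (τ : ℂ)) *
        (starRingEnd ℂ) (g (τ - t)) *
        Complex.exp (-2 * Real.pi * Complex.I * (ω : ℂ) * (τ : ℂ))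
      = Complex.exp (2 * Real.pi * Complex.I * ((ξ₀ - ω : ℝ) : ℂ) * (t : ℂ)) *
        (starRingEnd ℂ) ((fun u : ℝ => g u *
          Complex.exp (-2 * Real.pi * Complex.I * ((ξ₀ - ω : ℝ) : ℂ) * (u : ℂ))) (τ - t)) := by
    intro τ
    simp only [map_mul, ← Complex.exp_conj, map_neg, Complex.conj_I, Complex.conj_ofReal,
      map_mul, map_ofNat]
    have h : Complex.exp (2 * Real.pi * Complex.I * (ξ₀ : ℂ) * (τ : ℂ)) *
        Complex.exp (-2 * Real.pi * Complex.I * (ω : ℂ) * (τ : ℂ))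
        = Complex.exp (2 * Real.pi * Complex.I * ((ξ₀ - ω : ℝ) : ℂ) * (t : ℂ)) *
          Complex.exp (-2 * Real.pi * (-Complex.I) * ((ξ₀ - ω : ℝ) : ℂ) * ((τ - t : ℝ) : ℂ)) := by
      rw [← Complex.exp_add, ← Complex.exp_add]
      push_cast
      ring_nf
    linear_combination (starRingEnd ℂ) (g (τ - t)) * h
  rw [stftFreqInv]
  simp_rw [key]
  rw [MeasureTheory.integral_const_mul, integral_conj,
    MeasureTheory.integral_sub_right_eq_self
      (fun u : ℝ => g u * Complex.exp (-2 * Real.pi * Complex.I * ((ξ₀ - ω : ℝ) : ℂ) * (u : ℂ))) t]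
  rfl


/-- Lemma 1, CIF of a sinusoid: For the sinusoid `x τ = exp(2πiξ₀τ)` and
`g` continuously differentiable with `g, g' ∈ L¹`, for all `t, ω` with `ĝ (ξ₀ − ω) ≠ 0`,
`−(1/(2π)) · Im (V_{g'} x (t, ω) / V_g x (t, ω)) = ξ₀ − ω`. -/
theorem cif_of_sinusoid
    (ξ₀ : ℝ)
    (x : ℝ → ℂ)
    (hx : x = fun τ : ℝ => Complex.exp (2 * Real.pi * Complex.I * (ξ₀ : ℂ) * (τ : ℂ)))
    (g : ℝ → ℂ)
    (hg_smooth : ContDiff ℝ 1 g)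
    (hg : Integrable g (volume : Measure ℝ))
    (hg' : Integrable (deriv g) (volume : Measure ℝ)) :
    ∀ t ω : ℝ, fourierTf g (ξ₀ - ω) ≠ 0 →
      -(1 / (2 * Real.pi)) *
          (stftFreqInv (deriv g) x t ω / stftFreqInv g x t ω).im = ξ₀ - ω := by
  intro t ω hG
  subst hx
  set ξ : ℝ := ξ₀ - ω with hξ
  have hderiv : fourierTf (deriv g) ξ = (2 * Real.pi * Complex.I * (ξ : ℂ)) * fourierTf g ξ := by
    rw [fourierTf_eq, fourierTf_eq,
      Real.fourier_deriv hg (hg_smooth.differentiable one_ne_zero) hg']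
    simp only [smul_eq_mul]
  have h1 := stft_sinusoid (deriv g) ξ₀ t ω
  have h2 := stft_sinusoid g ξ₀ t ω
  rw [h1, h2, hderiv]
  have hc : Complex.exp (2 * Real.pi * Complex.I * ((ξ₀ - ω : ℝ) : ℂ) * (t : ℂ)) ≠ 0 :=
    Complex.exp_ne_zero _
  have hGc : (starRingEnd ℂ) (fourierTf g ξ) ≠ 0 := by
    simpa using hG
  rw [map_mul, show
      Complex.exp (2 * Real.pi * Complex.I * ((ξ₀ - ω : ℝ) : ℂ) * (t : ℂ)) *
        ((starRingEnd ℂ) (2 * Real.pi * Complex.I * (ξ : ℂ)) * (starRingEnd ℂ) (fourierTf g ξ)) /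
      (Complex.exp (2 * Real.pi * Complex.I * ((ξ₀ - ω : ℝ) : ℂ) * (t : ℂ)) *
        (starRingEnd ℂ) (fourierTf g ξ))
      = (starRingEnd ℂ) (2 * Real.pi * Complex.I * (ξ : ℂ)) from by
    field_simp]
  simp only [map_mul, Complex.conj_I, Complex.conj_ofReal, map_ofNat]
  have him : ((2 : ℂ) * (Real.pi : ℂ) * (-Complex.I) * (ξ : ℂ)).im = -(2 * Real.pi * ξ) := by
    simp [Complex.mul_im, Complex.mul_re]
  rw [him]
  have hπ : Real.pi ≠ 0 := Real.pi_ne_zero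
  field_simp
end

section
/- (Sawtooth claim of Lemma 4: LGD of a Dirac comb.) Let T > 0 and let μ = ∑_{ℓ ∈ ℤ} δ_{ℓT} be the Dirac comb measure with period T (the sum of Dirac measures at the points ℓT, ℓ ∈ ℤ). Let g : ℝ → ℂ satisfy g(u) = 0 for all u outside the interval [−T/2, T/2). Fix t, ω ∈ ℝ and let ℓ₀ ∈ ℤ be such that ℓ₀T − t ∈ [−T/2, T/2) and g(ℓ₀T − t) ≠ 0. Then Re( (∫_ℝ (τ − t) · conj(g(τ − t)) · exp(−2πiω(τ − t)) dμ(τ)) / (∫_ℝ conj(g(τ − t)) · exp(−2πiω(τ − t)) dμ(τ)) ) = ℓ₀T − t; in particular, as a function of t the local group delay of the Dirac comb is the T-periodic sawtooth t ↦ ℓ₀(t)·T − t. -/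
open MeasureTheory Complex Real

lemma comb_integral (T : ℝ) (hT : 0 < T) (ℓ₀ : ℤ) (h : ℝ → ℂ)
    (hz : ∀ ℓ : ℤ, ℓ ≠ ℓ₀ → h ((ℓ : ℝ) * T) = 0) :
    (∫ τ : ℝ, h τ ∂(Measure.sum fun ℓ : ℤ => Measure.dirac ((ℓ : ℝ) * T))) =
      h ((ℓ₀ : ℝ) * T) := by
  set a : ℝ := (ℓ₀ : ℝ) * T with ha
  set μ : Measure ℝ := Measure.sum fun ℓ : ℤ => Measure.dirac ((ℓ : ℝ) * T) with hμ
  have hinj : ∀ ℓ : ℤ, (ℓ : ℝ) * T = a → ℓ = ℓ₀ := by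
    intro ℓ hℓ
    have : (ℓ : ℝ) = ℓ₀ := by
      rw [ha] at hℓ
      exact mul_right_cancel₀ hT.ne' hℓ
    exact_mod_cast this
  have hS : MeasurableSet (Set.range fun ℓ : ℤ => (ℓ : ℝ) * T) :=
    (Set.countable_range _).measurableSet
  have hnull : μ (Set.range fun ℓ : ℤ => (ℓ : ℝ) * T)ᶜ = 0 := by
    rw [hμ, Measure.sum_apply _ hS.compl]
    refine ENNReal.tsum_eq_zero.2 fun ℓ => ?_
    rw [Measure.dirac_apply]
    simp [Set.indicator_apply]
  have hae : h =ᵐ[μ] Set.indicator {a} (fun _ => h a) := by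
    refine measure_mono_null ?_ hnull
    intro x hx
    simp only [Set.mem_setOf_eq] at hx
    simp only [Set.mem_compl_iff, Set.mem_range]
    rintro ⟨ℓ, rfl⟩
    by_cases hℓ : ℓ = ℓ₀
    · subst hℓ
      exact hx (by simp [Set.indicator_apply, ha])
    · refine hx ?_
      show h ((ℓ : ℝ) * T) = _
      rw [hz ℓ hℓ, Set.indicator_apply, if_neg]
      intro hmem
      exact hℓ (hinj ℓ hmem)
  have hμa : μ {a} = 1 := by
    rw [hμ, Measure.sum_apply _ (measurableSet_singleton a)]
    have : ∀ ℓ : ℤ, Measure.dirac ((ℓ : ℝ) * T) {a} = if ℓ = ℓ₀ then 1 else 0 := by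
      intro ℓ
      rw [Measure.dirac_apply]
      by_cases hℓ : ℓ = ℓ₀
      · subst hℓ; simp [Set.indicator_apply, ha]
      · simp only [Set.indicator_apply, Set.mem_singleton_iff, if_neg hℓ]
        rw [if_neg]
        intro hmem
        exact hℓ (hinj ℓ hmem)
    simp_rw [this]
    exact tsum_ite_eq ℓ₀ 1
  calc (∫ τ, h τ ∂μ) = ∫ τ, Set.indicator {a} (fun _ => h a) τ ∂μ :=
        integral_congr_ae hae
    _ = h a := by
        rw [integral_indicator_const _ (measurableSet_singleton a), measureReal_def, hμa]
        simp

/-- Sawtooth claim of Lemma 4, LGD of a Dirac comb: Let `T > 0` and let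
`μ = ∑_{ℓ ∈ ℤ} δ_{ℓT}` be the Dirac comb of period `T`. Suppose `g` vanishes outside
`[−T/2, T/2)`. Fix `t, ω` and `ℓ₀ ∈ ℤ` with `ℓ₀T − t ∈ [−T/2, T/2)` and
`g (ℓ₀T − t) ≠ 0`. Then the LGD of the Dirac comb is
`Re (V^t_{Tg} μ (t, ω) / V^t_g μ (t, ω)) = ℓ₀T − t` (the `T`-periodic sawtooth as a
function of `t`). -/
theorem lgd_of_dirac_comb
    (T : ℝ) (hT : 0 < T)
    (g : ℝ → ℂ)
    (hsupp : ∀ u : ℝ, u ∉ Set.Ico (-(T / 2)) (T / 2) → g u = 0)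
    (t ω : ℝ) (ℓ₀ : ℤ)
    (hℓ₀ : (ℓ₀ : ℝ) * T - t ∈ Set.Ico (-(T / 2)) (T / 2))
    (hgne : g ((ℓ₀ : ℝ) * T - t) ≠ 0) :
    ((∫ τ : ℝ, ((τ : ℂ) - (t : ℂ)) * (starRingEnd ℂ) (g (τ - t)) *
          Complex.exp (-2 * Real.pi * Complex.I * (ω : ℂ) * ((τ : ℂ) - (t : ℂ)))
          ∂(Measure.sum fun ℓ : ℤ => Measure.dirac ((ℓ : ℝ) * T))) /
        (∫ τ : ℝ, (starRingEnd ℂ) (g (τ - t)) *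
          Complex.exp (-2 * Real.pi * Complex.I * (ω : ℂ) * ((τ : ℂ) - (t : ℂ)))
          ∂(Measure.sum fun ℓ : ℤ => Measure.dirac ((ℓ : ℝ) * T)))).re =
      (ℓ₀ : ℝ) * T - t := by
  have hgz : ∀ ℓ : ℤ, ℓ ≠ ℓ₀ → g ((ℓ : ℝ) * T - t) = 0 := by
    intro ℓ hℓ
    refine hsupp _ fun hmem => ?_
    obtain ⟨h1, h2⟩ := hmem
    obtain ⟨h3, h4⟩ := hℓ₀
    have hne : (ℓ : ℝ) ≠ (ℓ₀ : ℝ) := by exact_mod_cast hℓ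
    have hd : |(ℓ : ℝ) - ℓ₀| ≥ 1 := by
      have : (1 : ℝ) ≤ |(ℓ - ℓ₀ : ℤ)| := by
        exact_mod_cast Int.one_le_abs (sub_ne_zero.2 hℓ)
      push_cast at this
      linarith [this]
    rcases le_abs.mp hd with h | h <;> nlinarith [abs_nonneg ((ℓ:ℝ) - ℓ₀)]
  have hnum := comb_integral T hT ℓ₀
    (fun τ => ((τ : ℂ) - (t : ℂ)) * (starRingEnd ℂ) (g (τ - t)) *
      Complex.exp (-2 * Real.pi * Complex.I * (ω : ℂ) * ((τ : ℂ) - (t : ℂ))))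
    (fun ℓ hℓ => by simp [hgz ℓ hℓ])
  have hden := comb_integral T hT ℓ₀
    (fun τ => (starRingEnd ℂ) (g (τ - t)) *
      Complex.exp (-2 * Real.pi * Complex.I * (ω : ℂ) * ((τ : ℂ) - (t : ℂ))))
    (fun ℓ hℓ => by simp [hgz ℓ hℓ])
  have key : ∀ x C E : ℂ, C ≠ 0 → E ≠ 0 → x * C * E / (C * E) = x := by
    intros x C E hC hE; field_simp
  rw [hnum, hden]
  rw [key _ _ _ (by simpa using hgne) (Complex.exp_ne_zero _)]
  simp
end
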